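/- Let γ be a 2n×2n real symplectic matrix with eigenvalue λ = e^{iθ₀} on the unit circle, and Jordan chains ξ_{i,j} as above with block sizes j_1 ≥ ... ≥ j_m. If j_i > j_{i'} (the i-th block is strictly larger than the i'-th), then (η_{i', j_{i'}}, η_{i,1})_G = 0, where η_{i,j} = (-i e^{iθ₀})^j ξ_{i,j}; i.e., the matrix X_{i,i'} = (η_{i,j_i}, η_{i',1})_G is block upper triangular with respect to the grouping by Jordan block size. -/

import Mathlib

open Matrix Complex

noncomputable def JmatR (n : ℕ) : Matrix (Fin n ⊕ Fin n) (Fin n ⊕ Fin n) ℝ :=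
  Matrix.fromBlocks 0 1 (-1) 0

noncomputable def Jmat (n : ℕ) : Matrix (Fin n ⊕ Fin n) (Fin n ⊕ Fin n) ℂ :=
  Matrix.fromBlocks 0 1 (-1) 0

/-- The Krein form `(x,y)_G = i ⟨x, J y⟩`. -/
noncomputable def krein (n : ℕ) (x y : (Fin n ⊕ Fin n) → ℂ) : ℂ :=
  Complex.I * ∑ j, x j * (starRingEnd ℂ) ((Jmat n).mulVec y j)

lemma Jmat_eq_map (n : ℕ) : (JmatR n).map Complex.ofReal = Jmat n := by
  ext i j
  cases i <;> cases j <;>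
    simp [JmatR, Jmat, Matrix.fromBlocks, Matrix.map_apply, Matrix.one_apply, apply_ite]

lemma Jmat_conj (n : ℕ) : (Jmat n).map (starRingEnd ℂ) = Jmat n := by
  rw [← Jmat_eq_map]
  ext i j
  simp [Matrix.map_apply]

lemma krein_eq (n : ℕ) (x y : (Fin n ⊕ Fin n) → ℂ) :
    krein n x y = Complex.I * (x ⬝ᵥ ((Jmat n) *ᵥ (star y))) := by
  unfold krein
  congr 1
  rw [dotProduct]
  congr 1
  ext j
  congr 1
  rw [Matrix.mulVec, Matrix.mulVec, dotProduct, dotProduct, map_sum]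
  congr 1; ext k
  rw [RingHom.map_mul]
  have : (starRingEnd ℂ) (Jmat n j k) = Jmat n j k := by
    have := congrFun (congrFun (Jmat_conj n) j) k
    simpa [Matrix.map_apply] using this
  simp [this, Pi.star_apply]

lemma map_real_conj (n : ℕ) (γ : Matrix (Fin n ⊕ Fin n) (Fin n ⊕ Fin n) ℝ)
    (v : (Fin n ⊕ Fin n) → ℂ) :
    star ((γ.map Complex.ofReal) *ᵥ v) = (γ.map Complex.ofReal) *ᵥ (star v) := by
  ext j
  simp [Matrix.mulVec, dotProduct, map_sum, Pi.star_apply, Matrix.map_apply, Complex.conj_ofReal]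

lemma krein_invariant (n : ℕ) (γ : Matrix (Fin n ⊕ Fin n) (Fin n ⊕ Fin n) ℝ)
    (hγ : γᵀ * JmatR n * γ = JmatR n) (x y : (Fin n ⊕ Fin n) → ℂ) :
    krein n ((γ.map Complex.ofReal) *ᵥ x) ((γ.map Complex.ofReal) *ᵥ y) = krein n x y := by
  set A := γ.map Complex.ofReal with hA
  have hsymp : Aᵀ * Jmat n * A = Jmat n := by
    have h2 := congrArg (fun M : Matrix (Fin n ⊕ Fin n) (Fin n ⊕ Fin n) ℝ =>
      M.map (Complex.ofRealHom : ℝ →+* ℂ)) hγ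
    simp only [Matrix.map_mul] at h2
    have hco : ⇑Complex.ofRealHom = Complex.ofReal := rfl
    rw [hco] at h2
    rw [← Jmat_eq_map, hA, ← Matrix.transpose_map]
    exact h2
  rw [krein_eq, krein_eq, map_real_conj]
  congr 1
  rw [Matrix.mulVec_mulVec, Matrix.dotProduct_mulVec, Matrix.vecMul_mulVec]
  rw [← Matrix.mul_assoc, hsymp, ← Matrix.dotProduct_mulVec]

lemma krein_smul_left (n : ℕ) (c : ℂ) (x y : (Fin n ⊕ Fin n) → ℂ) :
    krein n (c • x) y = c * krein n x y := by
  rw [krein_eq, krein_eq, smul_dotProduct]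
  ring_nf

lemma krein_smul_right (n : ℕ) (c : ℂ) (x y : (Fin n ⊕ Fin n) → ℂ) :
    krein n x (c • y) = (starRingEnd ℂ) c * krein n x y := by
  rw [krein_eq, krein_eq]
  have : star (c • y) = (starRingEnd ℂ) c • star y := by
    ext j; simp [Pi.star_apply, mul_comm]
  rw [this, Matrix.mulVec_smul, dotProduct_smul]
  simp [smul_eq_mul]; ring

lemma krein_sub_left (n : ℕ) (x x' y : (Fin n ⊕ Fin n) → ℂ) :
    krein n (x - x') y = krein n x y - krein n x' y := by
  rw [krein_eq, krein_eq, krein_eq, sub_dotProduct]; ring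

lemma krein_sub_right (n : ℕ) (x y y' : (Fin n ⊕ Fin n) → ℂ) :
    krein n x (y - y') = krein n x y - krein n x y' := by
  rw [krein_eq, krein_eq, krein_eq]
  have : star (y - y') = star y - star y' := by ext j; simp
  rw [this, Matrix.mulVec_sub, dotProduct_sub]; ring

lemma krein_zero_left (n : ℕ) (y : (Fin n ⊕ Fin n) → ℂ) : krein n 0 y = 0 := by
  rw [krein_eq]; simp

/-- Block upper-triangularity of `X`: if the `i`-th Jordan block is strictly larger than the
`i'`-th one, then `(η_{i',j_{i'}}, η_{i,1})_G = 0`. -/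
theorem krein_X_block_upper_triangular (n m : ℕ)
    (γ : Matrix (Fin n ⊕ Fin n) (Fin n ⊕ Fin n) ℝ)
    (hγ : γᵀ * JmatR n * γ = JmatR n)
    (θ0 : ℝ)
    (jsz : Fin m → ℕ) (hjsz : ∀ i, 1 ≤ jsz i)
    (hmono : ∀ i i' : Fin m, i ≤ i' → jsz i' ≤ jsz i)
    (ξ η : Fin m → ℕ → (Fin n ⊕ Fin n) → ℂ)
    (hzero : ∀ i, ξ i 0 = 0)
    (hchain : ∀ i : Fin m, ∀ j : ℕ, 1 ≤ j → j ≤ jsz i →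
      (γ.map Complex.ofReal).mulVec (ξ i j) = Complex.exp (Complex.I * θ0) • ξ i j - ξ i (j - 1))
    (hη : ∀ i j, η i j = ((-Complex.I) * Complex.exp (Complex.I * θ0)) ^ j • ξ i j)
    (i i' : Fin m) (hlt : jsz i' < jsz i) :
    krein n (η i' (jsz i')) (η i 1) = 0 := by
  set lam := Complex.exp (Complex.I * θ0) with hlam
  have hunit : (starRingEnd ℂ) lam * lam = 1 := by
    rw [hlam, ← Complex.exp_conj, ← Complex.exp_add]
    have harg : (starRingEnd ℂ) (Complex.I * θ0) + Complex.I * θ0 = 0 := by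
      simp [Complex.conj_ofReal]
    rw [harg, Complex.exp_zero]
  have hlamne : lam ≠ 0 := Complex.exp_ne_zero _
  set b : ℕ → ℕ → ℂ := fun j k => krein n (ξ i' j) (ξ i k) with hb
  -- recurrence
  have hrec : ∀ j k : ℕ, 1 ≤ j → j ≤ jsz i' → 1 ≤ k → k ≤ jsz i →
      lam * b j (k-1) + (starRingEnd ℂ) lam * b (j-1) k = b (j-1) (k-1) := by
    intro j k hj1 hj2 hk1 hk2
    have hinv := krein_invariant n γ hγ (ξ i' j) (ξ i k)
    rw [hchain i' j hj1 hj2, hchain i k hk1 hk2] at hinv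
    rw [krein_sub_left, krein_sub_right, krein_sub_right, krein_smul_left,
      krein_smul_right, krein_smul_right, krein_smul_left] at hinv
    rw [hb]
    have := hinv
    -- hinv : lam * (conj lam * b j k) - lam * b j (k-1) - (conj lam * b (j-1) k - b (j-1) (k-1)) = b j k
    have h1 : lam * ((starRingEnd ℂ) lam * krein n (ξ i' j) (ξ i k)) = krein n (ξ i' j) (ξ i k) := by
      rw [← mul_assoc, mul_comm lam, hunit, one_mul]
    linear_combination h1 - hinv
  -- main induction
  have main : ∀ j, ∀ k, j ≤ jsz i' → 1 ≤ k → j + k ≤ jsz i → b j k = 0 := by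
    intro j
    induction j with
    | zero => intro k _ _ _; rw [hb]; simp only [hzero]; exact krein_zero_left n _
    | succ j ih =>
      intro k hj hk1 hjk
      have hk2 : k + 1 ≤ jsz i := by omega
      have h := hrec (j+1) (k+1) (by omega) hj (by omega) hk2
      simp only [Nat.add_sub_cancel] at h
      rw [ih (k+1) (by omega) (by omega) (by omega), ih k (by omega) hk1 (by omega)] at h
      simp only [mul_zero, add_zero] at h
      exact (mul_eq_zero.mp h).resolve_left hlamne
  have hb0 : krein n (ξ i' (jsz i')) (ξ i 1) = 0 :=
    main (jsz i') 1 le_rfl le_rfl (by omega)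
  rw [hη, hη, krein_smul_left, krein_smul_right, hb0, mul_zero, mul_zero]
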